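/- Rotation of the induced voltage along the steady-state flow. Fix ω0 ∈ ℝ and define the induced voltage v_ind(θ, i) = ω0·(L(θ)·𝒿ᵀ + 𝒿·L(θ))·i for θ ∈ ℝ, i ∈ ℝ⁵. Then for all θ ∈ ℝ and i ∈ ℝ⁵, (∂v_ind/∂θ)(θ, i)·ω0 + Dv_ind(θ, i)[ω0·𝒿·i] = ω0·𝒿·v_ind(θ, i), where Dv_ind(θ, i)[w] denotes the derivative of v_ind in its second argument applied to w (equal to ω0·(L(θ)·𝒿ᵀ + 𝒿·L(θ))·w by linearity). -/

import Mathlib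

noncomputable section
open Matrix

/-- Vectors in ℝ². -/
abbrev V2 : Type := Fin 2 → ℝ
/-- 2×2 real matrices. -/
abbrev M2 : Type := Matrix (Fin 2) (Fin 2) ℝ

/-- The 90° rotation matrix `j`. -/
def j2 : M2 := !![0, -1; 1, 0]

/-- The rotation matrix `R(θ)`. -/
def Rot (θ : ℝ) : M2 := !![Real.cos θ, -Real.sin θ; Real.sin θ, Real.cos θ]

/-- The unit vector `r(θ) = (cos θ, sin θ)`. -/
def rvec (θ : ℝ) : V2 := ![Real.cos θ, Real.sin θ]

/-- The Euclidean norm on ℝ². -/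
def enorm2 (w : V2) : ℝ := Real.sqrt (w 0 ^ 2 + w 1 ^ 2)
/-- Index type for the 5 machine windings: 2 stator + 3 rotor (f, d, q). -/
abbrev I5 : Type := Fin 2 ⊕ Fin 3
/-- Vectors in ℝ⁵ (machine currents/voltages). -/
abbrev V5 : Type := I5 → ℝ

/-- The 5×5 matrix 𝒿 = diag(j, 0₃ₓ₃). -/
def jj : Matrix I5 I5 ℝ := Matrix.fromBlocks j2 0 0 0

/-- Parameters of a synchronous machine. -/
structure Machine where
  /-- stator winding resistance -/
  rs : ℝ
  /-- excitation winding resistance -/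
  rf : ℝ
  /-- d-axis damper winding resistance -/
  rd : ℝ
  /-- q-axis damper winding resistance -/
  rq : ℝ
  /-- stator winding inductance -/
  ls : ℝ
  /-- rotor saliency -/
  lsa : ℝ
  /-- excitation winding inductance -/
  lf : ℝ
  /-- d-axis damper winding inductance -/
  ld : ℝ
  /-- q-axis damper winding inductance -/
  lq : ℝ
  /-- mutual inductance of excitation and damper winding -/
  lfd : ℝ
  /-- stator–excitation mutual inductance -/
  lsf : ℝ
  /-- stator–d-damper mutual inductance -/
  lsd : ℝ
  /-- stator–q-damper mutual inductance -/
  lsq : ℝ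
  /-- rotor inertia -/
  m : ℝ
  /-- rotor damping -/
  d : ℝ
  rs_pos : 0 < rs
  rf_pos : 0 < rf
  rd_pos : 0 < rd
  rq_pos : 0 < rq
  ls_pos : 0 < ls
  lsa_nonneg : 0 ≤ lsa
  lf_pos : 0 < lf
  ld_pos : 0 < ld
  lq_pos : 0 < lq
  lfd_pos : 0 < lfd
  lsf_pos : 0 < lsf
  lsd_pos : 0 < lsd
  lsq_pos : 0 < lsq
  m_pos : 0 < m
  d_pos : 0 < d

namespace Machine

/-- Stator inductance matrix L_s(θ). -/
def Ls (mc : Machine) (θ : ℝ) : M2 :=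
  mc.ls • (1 : M2) + Rot (2 * θ) * !![mc.lsa, 0; 0, -mc.lsa]

/-- Mutual inductance matrix L_m(θ). -/
def Lm (mc : Machine) (θ : ℝ) : Matrix (Fin 2) (Fin 3) ℝ :=
  Rot θ * !![mc.lsf, mc.lsd, 0; 0, 0, -mc.lsq]

/-- Rotor inductance matrix L_r. -/
def Lr (mc : Machine) : Matrix (Fin 3) (Fin 3) ℝ :=
  !![mc.lf, mc.lfd, 0; mc.lfd, mc.ld, 0; 0, 0, mc.lq]

/-- The 5×5 machine inductance matrix L(θ). -/
def Lmat (mc : Machine) (θ : ℝ) : Matrix I5 I5 ℝ :=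
  Matrix.fromBlocks (mc.Ls θ) (mc.Lm θ) (mc.Lm θ)ᵀ mc.Lr

/-- The 5×5 machine resistance matrix R = diag(r_s I₂, r_f, r_d, r_q). -/
def Rmat (mc : Machine) : Matrix I5 I5 ℝ :=
  Matrix.fromBlocks (mc.rs • (1 : M2)) 0 0 (Matrix.diagonal ![mc.rf, mc.rd, mc.rq])

/-- Electrical torque τ_e = ½ iᵀ(L(θ)𝒿 + 𝒿ᵀL(θ))i. -/
def torque (mc : Machine) (θ : ℝ) (i : V5) : ℝ :=
  (1 / 2) * (i ⬝ᵥ ((mc.Lmat θ * jj + jjᵀ * mc.Lmat θ) *ᵥ i))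

/-- Induced voltage v_ind = ω(L(θ)𝒿ᵀ + 𝒿L(θ))i. -/
def vind (mc : Machine) (ω θ : ℝ) (i : V5) : V5 :=
  ω • ((mc.Lmat θ * jjᵀ + jj * mc.Lmat θ) *ᵥ i)

/-- Stator impedance Z_s(θ) = r_s I₂ + ω₀ j L_s(θ). -/
def Zs (mc : Machine) (ω0 θ : ℝ) : M2 :=
  mc.rs • (1 : M2) + ω0 • (j2 * mc.Ls θ)

/-- The open-circuit stator voltage error ν(θ) = v − Z_s(θ) i_s. -/
def nu (mc : Machine) (ω0 θ : ℝ) (v is : V2) : V2 :=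
  v - mc.Zs ω0 θ *ᵥ is

end Machine


lemma jjT : jjᵀ = -jj := by
  ext a b
  rcases a with a | a <;> rcases b with b | b <;>
    fin_cases a <;> fin_cases b <;>
    simp [jj, j2, Matrix.fromBlocks]

/-- Coefficient matrices for the trig representation of L(θ). -/
def C1 (mc : Machine) : Matrix I5 I5 ℝ :=
  Matrix.fromBlocks 0 !![mc.lsf, mc.lsd, 0; 0, 0, -mc.lsq]
    !![mc.lsf, 0; mc.lsd, 0; 0, -mc.lsq] 0
def C2 (mc : Machine) : Matrix I5 I5 ℝ :=
  Matrix.fromBlocks 0 !![0, 0, mc.lsq; mc.lsf, mc.lsd, 0]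
    !![0, mc.lsf; 0, mc.lsd; mc.lsq, 0] 0
def C3 (mc : Machine) : Matrix I5 I5 ℝ :=
  Matrix.fromBlocks !![mc.lsa, 0; 0, -mc.lsa] 0 0 0
def C4 (mc : Machine) : Matrix I5 I5 ℝ :=
  Matrix.fromBlocks !![0, mc.lsa; mc.lsa, 0] 0 0 0
def C0 (mc : Machine) : Matrix I5 I5 ℝ :=
  Matrix.fromBlocks (mc.ls • (1 : M2)) 0 0 mc.Lr

lemma Lmat_rep (mc : Machine) (φ : ℝ) (a b : I5) :
    mc.Lmat φ a b = C0 mc a b + C1 mc a b * Real.cos φ + C2 mc a b * Real.sin φ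
      + C3 mc a b * Real.cos (2 * φ) + C4 mc a b * Real.sin (2 * φ) := by
  rcases a with a | a <;> rcases b with b | b <;>
    fin_cases a <;> fin_cases b <;>
    simp [Machine.Lmat, Machine.Ls, Machine.Lm, Machine.Lr, C0, C1, C2, C3, C4,
      Rot, Matrix.mul_apply, Fin.sum_univ_succ, Matrix.one_apply, Matrix.transpose_apply, Matrix.vecHead, Matrix.vecTail] <;> ring

set_option maxHeartbeats 2000000 in
lemma Lp_rep (mc : Machine) (θ : ℝ) (a b : I5) :
    (mc.Lmat θ * jjᵀ + jj * mc.Lmat θ) a b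
      = C1 mc a b * (-Real.sin θ) + C2 mc a b * Real.cos θ
        + C3 mc a b * (-(2 * Real.sin (2 * θ))) + C4 mc a b * (2 * Real.cos (2 * θ)) := by
  rcases a with a | a <;> rcases b with b | b <;>
    fin_cases a <;> fin_cases b <;>
    simp [Machine.Lmat, Machine.Ls, Machine.Lm, Machine.Lr, C1, C2, C3, C4, jj, j2,
      Rot, Matrix.mul_apply, Fin.sum_univ_succ, Fintype.sum_sum_type, Matrix.one_apply,
      Matrix.transpose_apply, Matrix.vecHead, Matrix.vecTail] <;> ring

lemma hasDerivAt_Lmat (mc : Machine) (θ : ℝ) (a b : I5) :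
    HasDerivAt (fun φ => mc.Lmat φ a b) ((mc.Lmat θ * jjᵀ + jj * mc.Lmat θ) a b) θ := by
  have h2 : HasDerivAt (fun φ : ℝ => 2 * φ) 2 θ := by
    simpa using (hasDerivAt_id θ).const_mul 2
  have hc2 : HasDerivAt (fun φ : ℝ => Real.cos (2 * φ)) (-(2 * Real.sin (2 * θ))) θ := by
    have h' : HasDerivAt (fun φ : ℝ => Real.cos (2 * φ)) (-Real.sin (2 * θ) * 2) θ :=
      (Real.hasDerivAt_cos (2 * θ)).comp θ h2
    convert h' using 1; ring
  have hs2 : HasDerivAt (fun φ : ℝ => Real.sin (2 * φ)) (2 * Real.cos (2 * θ)) θ := by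
    have h' : HasDerivAt (fun φ : ℝ => Real.sin (2 * φ)) (Real.cos (2 * θ) * 2) θ :=
      (Real.hasDerivAt_sin (2 * θ)).comp θ h2
    convert h' using 1; ring
  have h : HasDerivAt
      (fun φ => C0 mc a b + C1 mc a b * Real.cos φ + C2 mc a b * Real.sin φ
        + C3 mc a b * Real.cos (2 * φ) + C4 mc a b * Real.sin (2 * φ))
      (C1 mc a b * (-Real.sin θ) + C2 mc a b * Real.cos θ
        + C3 mc a b * (-(2 * Real.sin (2 * θ))) + C4 mc a b * (2 * Real.cos (2 * θ))) θ := by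
    have := ((((hasDerivAt_const θ (C0 mc a b)).add
      ((Real.hasDerivAt_cos θ).const_mul (C1 mc a b))).add
      ((Real.hasDerivAt_sin θ).const_mul (C2 mc a b))).add
      (hc2.const_mul (C3 mc a b))).add (hs2.const_mul (C4 mc a b))
    rw [zero_add] at this
    exact this
  rw [Lp_rep]
  simpa [← Lmat_rep] using h

lemma hasDerivAt_vind (mc : Machine) (ω0 θ : ℝ) (i : V5) (a : I5) :
    HasDerivAt (fun φ => mc.vind ω0 φ i a)
      (ω0 * ((((mc.Lmat θ * jjᵀ + jj * mc.Lmat θ) * jjᵀ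
        + jj * (mc.Lmat θ * jjᵀ + jj * mc.Lmat θ)) *ᵥ i) a)) θ := by
  have h : HasDerivAt (fun φ => ((mc.Lmat φ * jjᵀ + jj * mc.Lmat φ) *ᵥ i) a)
      ((((mc.Lmat θ * jjᵀ + jj * mc.Lmat θ) * jjᵀ
        + jj * (mc.Lmat θ * jjᵀ + jj * mc.Lmat θ)) *ᵥ i) a) θ := by
    simp only [Matrix.mulVec, dotProduct, Matrix.add_apply, Matrix.mul_apply]
    apply HasDerivAt.fun_sum
    intro b _
    exact ((HasDerivAt.fun_sum fun c _ => (hasDerivAt_Lmat mc θ a c).mul_const (jjᵀ c b)).add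
      (HasDerivAt.fun_sum fun c _ => (hasDerivAt_Lmat mc θ c b).const_mul (jj a c))).mul_const (i b)
  simpa [Machine.vind, Pi.smul_apply, smul_eq_mul] using h.const_mul ω0

/-- The induced voltage v_ind(θ,i) = ω₀(L(θ)𝒿ᵀ + 𝒿L(θ))i rotates
along the steady-state flow: (∂v_ind/∂θ)·ω₀ + Dv_ind(θ,i)[ω₀𝒿i] = ω₀ 𝒿 v_ind(θ,i),
where by linearity Dv_ind(θ,i)[w] = ω₀(L(θ)𝒿ᵀ + 𝒿L(θ))w. -/
theorem vind_rotates_along_flow (mc : Machine) (ω0 θ : ℝ) (i : V5) :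
    (fun a => deriv (fun φ => mc.vind ω0 φ i a) θ * ω0)
      + ω0 • ((mc.Lmat θ * jjᵀ + jj * mc.Lmat θ) *ᵥ (ω0 • (jj *ᵥ i)))
      = ω0 • (jj *ᵥ mc.vind ω0 θ i) := by
  set B := mc.Lmat θ * jjᵀ + jj * mc.Lmat θ with hB
  have key : (B * jjᵀ + jj * B) + B * jj = jj * B := by
    rw [jjT]; noncomm_ring
  funext a
  have h5 : (((B * jjᵀ + jj * B) *ᵥ i) a) + (((B * jj) *ᵥ i) a) = (((jj * B) *ᵥ i) a) := by
    have := congrArg (fun M => (M *ᵥ i) a) key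
    simpa [Matrix.add_mulVec, Pi.add_apply] using this
  have hd := (hasDerivAt_vind mc ω0 θ i a).deriv
  simp only [Pi.add_apply]
  rw [hd]
  simp only [Machine.vind, Matrix.mulVec_smul, Matrix.mulVec_mulVec,
    Pi.smul_apply, smul_eq_mul, ← hB]
  linear_combination (ω0 * ω0) * h5
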